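/- Let p be a prime, m ≥ 2 an integer, and set m̄ = m/2 if m is even and m̄ = (m+1)/2 if m is odd. Let f ∈ ℤ[x₁,…,xₙ] and x₀ ∈ ℤⁿ be such that p^{m−1} divides f(x₀) and there exists i with 2·v_p((∂f/∂xᵢ)(x₀)) < m−1. Then Σ_{y ∈ {0,1,…,p^{m−m̄}−1}ⁿ} exp(2πi·f(x₀ + p^{m̄}y)/p^m) = 0. -/

import Mathlib

open MvPolynomial

/-- The `p`-adic valuation `v_p : ℤ → ℕ∞`, with `v_p 0 = ⊤`. -/
def vp (p : ℕ) (a : ℤ) : ℕ∞ := if a = 0 then ⊤ else (padicValInt p a : ℕ∞)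

private lemma taylor_sq {n : ℕ} (q : ℤ) (f : MvPolynomial (Fin n) ℤ) (a t : Fin n → ℤ)
    (ht : ∀ i, q ∣ t i) :
    q ^ 2 ∣ eval (fun i => a i + t i) f - eval a f - ∑ i, eval a (pderiv i f) * t i := by
  classical
  induction f using MvPolynomial.induction_on with
  | C c => simp
  | add f g hf hg =>
      have h := dvd_add hf hg
      have key : eval (fun i => a i + t i) (f + g) - eval a (f + g)
          - ∑ i, eval a (pderiv i (f + g)) * t i
          = (eval (fun i => a i + t i) f - eval a f - ∑ i, eval a (pderiv i f) * t i)
            + (eval (fun i => a i + t i) g - eval a g - ∑ i, eval a (pderiv i g) * t i) := by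
        simp only [map_add, add_mul, Finset.sum_add_distrib]
        ring
      rw [key]; exact h
  | mul_X f j hf =>
      have hD : q ∣ ∑ i, eval a (pderiv i f) * t i :=
        Finset.dvd_sum fun i _ => Dvd.dvd.mul_left (ht i) _
      have key : eval (fun i => a i + t i) (f * X j) - eval a (f * X j)
          - ∑ i, eval a (pderiv i (f * X j)) * t i
          = (eval (fun i => a i + t i) f - eval a f - ∑ i, eval a (pderiv i f) * t i) * a j
            + (eval (fun i => a i + t i) f - eval a f
                - ∑ i, eval a (pderiv i f) * t i) * t j
            + (∑ i, eval a (pderiv i f) * t i) * t j := by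
        simp only [pderiv_mul, pderiv_X, map_add, map_mul, eval_X, Pi.single_apply,
          apply_ite (eval a), map_one, map_zero, mul_ite, mul_one, mul_zero, ite_mul, zero_mul,
          add_mul, Finset.sum_add_distrib, Finset.sum_ite_eq, Finset.mem_univ, if_true]
        have hs : ∑ x : Fin n, eval a (pderiv x f) * a j * t x
            = (∑ x : Fin n, eval a (pderiv x f) * t x) * a j := by
          rw [Finset.sum_mul]; exact Finset.sum_congr rfl fun i _ => by ring
        rw [hs]; ring
      rw [key]
      refine dvd_add (dvd_add (hf.mul_right _) (hf.mul_right _)) ?_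
      calc q ^ 2 = q * q := sq q
        _ ∣ (∑ i, eval a (pderiv i f) * t i) * t j := mul_dvd_mul hD (ht j)

/-- Let `p` be prime, `m ≥ 2`, and `m̄ = m/2` if `m` is even, `m̄ = (m+1)/2` if `m` is odd.
Let `f ∈ ℤ[x₁,…,xₙ]` and `x₀ ∈ ℤⁿ` with `p^{m−1} ∣ f(x₀)` and `2·v_p((∂f/∂xᵢ)(x₀)) < m−1`
for some `i`.  Then `Σ_{y ∈ {0,…,p^{m−m̄}−1}ⁿ} e(f(x₀ + p^m̄ y)/p^m) = 0`. -/
theorem stmt12 (p : ℕ) (hp : p.Prime) (m : ℕ) (hm : 2 ≤ m) (mbar : ℕ)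
    (hmbar_even : Even m → mbar = m / 2) (hmbar_odd : ¬ Even m → mbar = (m + 1) / 2)
    {n : ℕ} (f : MvPolynomial (Fin n) ℤ) (x₀ : Fin n → ℤ)
    (hdiv : (p : ℤ) ^ (m - 1) ∣ MvPolynomial.eval x₀ f)
    (hder : ∃ i : Fin n,
      2 * vp p (MvPolynomial.eval x₀ (MvPolynomial.pderiv i f)) < ((m - 1 : ℕ) : ℕ∞)) :
    ∑ y : Fin n → Fin (p ^ (m - mbar)),
      Complex.exp (2 * Real.pi * Complex.I *
        ((MvPolynomial.eval (fun i => x₀ i + (p : ℤ) ^ mbar * ((y i : ℕ) : ℤ)) f : ℤ) : ℂ) /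
          (p : ℂ) ^ m) = 0 := by
  classical
  haveI : Fact p.Prime := ⟨hp⟩
  obtain ⟨i₀, hi₀⟩ := hder
  set d : Fin n → ℤ := fun i => eval x₀ (pderiv i f) with hdd
  have hd0 : d i₀ ≠ 0 := by
    intro h
    rw [vp, if_pos h] at hi₀
    simp at hi₀
  have hv : 2 * padicValInt p (d i₀) < m - 1 := by
    rw [vp, if_neg hd0] at hi₀
    exact_mod_cast hi₀
  set k := m - mbar with hk
  have harith : m ≤ 2 * mbar ∧ mbar ≤ m ∧ padicValInt p (d i₀) < k := by
    rcases Nat.even_or_odd m with he | ho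
    · have h1 := hmbar_even he; rw [Nat.even_iff] at he; omega
    · have h1 := hmbar_odd (Nat.not_even_iff_odd.mpr ho); rw [Nat.odd_iff] at ho; omega
  obtain ⟨h2mbar, hmbarle, hvk⟩ := harith
  have hpk_ndvd : ¬ (p : ℤ) ^ k ∣ d i₀ := by
    rw [padicValInt_dvd_iff]
    push_neg
    exact ⟨hd0, by omega⟩
  have hpC : (p : ℂ) ≠ 0 := Nat.cast_ne_zero.mpr hp.pos.ne'
  have hpkC : (p : ℂ) ^ k ≠ 0 := pow_ne_zero _ hpC
  have hpmC : (p : ℂ) ^ m ≠ 0 := pow_ne_zero _ hpC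
  have htwopiI : (2 * (Real.pi : ℂ) * Complex.I) ≠ 0 := by
    simp [Real.pi_ne_zero, Complex.I_ne_zero]
  -- periodicity helper
  have hexp_congr : ∀ a b : ℤ, (p : ℤ) ^ m ∣ a - b →
      Complex.exp (2 * Real.pi * Complex.I * (a : ℂ) / (p : ℂ) ^ m)
        = Complex.exp (2 * Real.pi * Complex.I * (b : ℂ) / (p : ℂ) ^ m) := by
    intro a b h
    obtain ⟨c, hc⟩ := h
    have hac : (a : ℂ) = (b : ℂ) + (p : ℂ) ^ m * (c : ℂ) := by
      have : (a : ℤ) = b + (p : ℤ) ^ m * c := by linarith [hc]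
      exact_mod_cast congrArg (Int.cast : ℤ → ℂ) this
    rw [hac, show 2 * (Real.pi : ℂ) * Complex.I * ((b : ℂ) + (p : ℂ) ^ m * (c : ℂ)) / (p : ℂ) ^ m
        = 2 * (Real.pi : ℂ) * Complex.I * (b : ℂ) / (p : ℂ) ^ m + (c : ℂ) * (2 * Real.pi * Complex.I)
        by field_simp, Complex.exp_add, Complex.exp_int_mul_two_pi_mul_I, mul_one]
  set C : ℂ := Complex.exp (2 * Real.pi * Complex.I * ((eval x₀ f : ℤ) : ℂ) / (p : ℂ) ^ m) with hC
  set g : Fin n → Fin (p ^ k) → ℂ := fun i j =>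
    Complex.exp (2 * Real.pi * Complex.I * ((d i : ℂ) * ((j : ℕ) : ℂ)) / (p : ℂ) ^ k) with hg
  have hsummand : ∀ y : Fin n → Fin (p ^ k),
      Complex.exp (2 * Real.pi * Complex.I *
        ((MvPolynomial.eval (fun i => x₀ i + (p : ℤ) ^ mbar * ((y i : ℕ) : ℤ)) f : ℤ) : ℂ) /
          (p : ℂ) ^ m) = C * ∏ i, g i (y i) := by
    intro y
    have ht := taylor_sq ((p : ℤ) ^ mbar) f x₀ (fun i => (p : ℤ) ^ mbar * ((y i : ℕ) : ℤ))
      (fun i => dvd_mul_right _ _)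
    rw [← pow_mul] at ht
    have hTay : (p : ℤ) ^ m ∣
        eval (fun i => x₀ i + (p : ℤ) ^ mbar * ((y i : ℕ) : ℤ)) f
          - (eval x₀ f + ∑ i, d i * ((p : ℤ) ^ mbar * ((y i : ℕ) : ℤ))) := by
      have h2 := (pow_dvd_pow (p : ℤ) (show m ≤ mbar * 2 by omega)).trans ht
      convert h2 using 1
      · rfl
      · ring
    rw [hexp_congr _ _ hTay]
    have hcast : ((eval x₀ f + ∑ i, d i * ((p : ℤ) ^ mbar * ((y i : ℕ) : ℤ)) : ℤ) : ℂ)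
        = ((eval x₀ f : ℤ) : ℂ) + ∑ i, (d i : ℂ) * ((p : ℂ) ^ mbar * ((y i : ℕ) : ℂ)) := by
      rw [Int.cast_add, Int.cast_sum]; congr 1; refine Finset.sum_congr rfl fun i _ => ?_; push_cast; ring
    rw [hcast]
    have hsplit : 2 * (Real.pi : ℂ) * Complex.I *
        (((eval x₀ f : ℤ) : ℂ) + ∑ i, (d i : ℂ) * ((p : ℂ) ^ mbar * ((y i : ℕ) : ℂ))) / (p : ℂ) ^ m
        = 2 * Real.pi * Complex.I * ((eval x₀ f : ℤ) : ℂ) / (p : ℂ) ^ m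
          + ∑ i, 2 * Real.pi * Complex.I * ((d i : ℂ) * ((y i : ℕ) : ℂ)) / (p : ℂ) ^ k := by
      have hpow : (p : ℂ) ^ m = (p : ℂ) ^ mbar * (p : ℂ) ^ k := by
        rw [← pow_add]
        congr 1
        omega
      rw [hpow, mul_add, add_div, Finset.mul_sum, Finset.sum_div]
      congr 1
      refine Finset.sum_congr rfl fun i _ => ?_
      field_simp
    rw [hsplit, Complex.exp_add, Complex.exp_sum]
  calc ∑ y : Fin n → Fin (p ^ (m - mbar)),
      Complex.exp (2 * Real.pi * Complex.I *
        ((MvPolynomial.eval (fun i => x₀ i + (p : ℤ) ^ mbar * ((y i : ℕ) : ℤ)) f : ℤ) : ℂ) /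
          (p : ℂ) ^ m)
      = ∑ y : Fin n → Fin (p ^ k), C * ∏ i, g i (y i) := Finset.sum_congr rfl fun y _ => hsummand y
    _ = C * ∑ y : Fin n → Fin (p ^ k), ∏ i, g i (y i) := by rw [Finset.mul_sum]
    _ = C * ∏ i, ∑ j : Fin (p ^ k), g i j := by
        rw [← Fintype.piFinset_univ, Finset.sum_prod_piFinset]
    _ = 0 := by
        have hzero : ∑ j : Fin (p ^ k), g i₀ j = 0 := by
          set ζ : ℂ := Complex.exp (2 * Real.pi * Complex.I * (d i₀ : ℂ) / (p : ℂ) ^ k) with hζ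
          have hterm : ∀ j : ℕ, Complex.exp
              (2 * Real.pi * Complex.I * ((d i₀ : ℂ) * (j : ℂ)) / (p : ℂ) ^ k) = ζ ^ j := by
            intro j
            rw [hζ, ← Complex.exp_nat_mul]
            congr 1
            field_simp
          have hζN : ζ ^ (p ^ k) = 1 := by
            rw [hζ, ← Complex.exp_nat_mul]
            have : ((p ^ k : ℕ) : ℂ) * (2 * Real.pi * Complex.I * (d i₀ : ℂ) / (p : ℂ) ^ k)
                = (d i₀ : ℂ) * (2 * Real.pi * Complex.I) := by
              push_cast
              field_simp
            rw [this, Complex.exp_int_mul_two_pi_mul_I]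
          have hζ1 : ζ ≠ 1 := by
            intro h
            rw [hζ, Complex.exp_eq_one_iff] at h
            obtain ⟨c, hc⟩ := h
            apply hpk_ndvd
            refine ⟨c, ?_⟩
            have hdc : (d i₀ : ℂ) = ((p : ℂ) ^ k) * (c : ℂ) := by
              field_simp at hc
              refine mul_left_cancel₀ htwopiI ?_
              linear_combination (2 * (Real.pi : ℂ) * Complex.I) * hc
            exact_mod_cast hdc
          calc ∑ j : Fin (p ^ k), g i₀ j = ∑ j ∈ Finset.range (p ^ k), ζ ^ j := by
                rw [Fin.sum_univ_eq_sum_range (fun j => Complex.exp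
                  (2 * Real.pi * Complex.I * ((d i₀ : ℂ) * (j : ℂ)) / (p : ℂ) ^ k))]
                exact Finset.sum_congr rfl fun j _ => hterm j
            _ = (ζ ^ (p ^ k) - 1) / (ζ - 1) := geom_sum_eq hζ1 _
            _ = 0 := by rw [hζN, sub_self, zero_div]
        rw [Finset.prod_eq_zero (Finset.mem_univ i₀) hzero, mul_zero]
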